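/- (Theorem 1) The weak XYZ Conjecture implies that the insulator is a semi-height on 𝔛: if for every δ > 0 there are only finitely many (A,B,C) ∈ 𝔛 satisfying log max{|A|,|B|,|C|} > δ · P⁺(ABC), then for every real number X > 0 the set of (A,B,C) ∈ 𝔛 with 𝔦(ABC) < X is finite. -/

import Mathlib

open Filter

/-- `(A,B,C)` is a primitive non-cuspidal solution to `A + B + C = 0`. -/
def IsABC (A B C : ℤ) : Prop :=
  A + B + C = 0 ∧ Int.gcd (Int.gcd A B) C = 1 ∧ A * B * C ≠ 0

/-- The height `H(A,B,C) = max {|A|, |B|, |C|}`. -/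
def height (A B C : ℤ) : ℤ := max |A| (max |B| |C|)

/-- The radical of a nonzero integer: its largest squarefree divisor,
the product of the distinct primes dividing it. -/
def rad (n : ℤ) : ℕ := ∏ p ∈ n.natAbs.primeFactors, p

/-- `P⁺(n)`: the largest prime divisor of `n`, or `1` if `|n| = 1`. -/
def Pplus (n : ℤ) : ℕ := max (n.natAbs.primeFactors.sup id) 1

/-- A nonzero integer `m` is insulated if every prime `p ≤ P⁺(m)` divides `m`. -/
def Insulated (m : ℤ) : Prop :=
  m ≠ 0 ∧ ∀ p : ℕ, p.Prime → p ≤ Pplus m → (p : ℤ) ∣ m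

/-- The insulator `𝔦(n)`: the smallest positive integer `I` such that `n * I` is insulated. -/
noncomputable def insulator (n : ℤ) : ℕ := sInf {I : ℕ | 0 < I ∧ Insulated (n * I)}

/-! ### Auxiliary lemmas about `Pplus`, `primorial` and `insulator` -/

lemma one_le_Pplus (n : ℤ) : 1 ≤ Pplus n := le_max_right _ _

lemma prime_le_Pplus {p : ℕ} {n : ℤ} (hp : p.Prime) (hd : (p : ℤ) ∣ n) (hn : n ≠ 0) :
    p ≤ Pplus n := by
  have hmem : p ∈ n.natAbs.primeFactors := by
    rw [Nat.mem_primeFactors]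
    refine ⟨hp, ?_, by simpa using hn⟩
    have := Int.natAbs_dvd_natAbs.mpr hd
    simpa using this
  calc p = id p := rfl
    _ ≤ n.natAbs.primeFactors.sup id := Finset.le_sup hmem
    _ ≤ Pplus n := le_max_left _ _

lemma Pplus_le {n : ℤ} {B : ℕ} (hB : 1 ≤ B)
    (h : ∀ p : ℕ, p.Prime → (p : ℤ) ∣ n → p ≤ B) : Pplus n ≤ B := by
  refine max_le (Finset.sup_le ?_) hB
  intro q hq
  rw [Nat.mem_primeFactors] at hq
  exact h q hq.1 ((Int.natCast_dvd_natCast.mpr hq.2.1).trans (Int.natAbs_dvd.mpr dvd_rfl))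

lemma Pplus_le_Pplus_of_dvd {m n : ℤ} (h : m ∣ n) (hn : n ≠ 0) : Pplus m ≤ Pplus n :=
  Pplus_le (one_le_Pplus n) fun p hp hpm => prime_le_Pplus hp (hpm.trans h) hn

lemma prime_dvd_primorial {p B : ℕ} (hp : p.Prime) (h : p ≤ B) : p ∣ primorial B :=
  Finset.dvd_prod_of_mem _ (by
    simp only [primorial, Finset.mem_filter, Finset.mem_range]
    exact ⟨by omega, hp⟩)

lemma le_of_prime_dvd_primorial {q B : ℕ} (hq : q.Prime) (h : q ∣ primorial B) : q ≤ B := by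
  obtain ⟨p, hp, hqp⟩ := hq.prime.exists_mem_finset_dvd h
  rw [Finset.mem_filter, Finset.mem_range] at hp
  have : q = p := (Nat.prime_dvd_prime_iff_eq hq hp.2).mp hqp
  omega

lemma insulator_spec {n : ℤ} (hn : n ≠ 0) :
    0 < insulator n ∧ Insulated (n * insulator n) := by
  have hne : {I : ℕ | 0 < I ∧ Insulated (n * I)}.Nonempty := by
    refine ⟨primorial (Pplus n), primorial_pos _, ?_, ?_⟩
    · exact mul_ne_zero hn (by exact_mod_cast (primorial_pos (Pplus n)).ne')
    · intro p hp hple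
      have hPle : Pplus (n * (primorial (Pplus n) : ℤ)) ≤ Pplus n := by
        refine Pplus_le (one_le_Pplus n) fun q hq hqd => ?_
        rcases (Nat.prime_iff_prime_int.mp hq).dvd_mul.mp hqd with h | h
        · exact prime_le_Pplus hq h hn
        · exact le_of_prime_dvd_primorial hq (Int.natCast_dvd_natCast.mp (by simpa using h))
      exact Dvd.dvd.mul_left
        (Int.natCast_dvd_natCast.mpr (prime_dvd_primorial hp (hple.trans hPle))) n
  exact Nat.sInf_mem hne

lemma primorial_le_natAbs_mul_insulator {n : ℤ} (hn : n ≠ 0) :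
    primorial (Pplus n) ≤ n.natAbs * insulator n := by
  obtain ⟨hpos, hne, hins⟩ := insulator_spec hn
  have hni : (n * (insulator n : ℤ)) ≠ 0 := hne
  refine Nat.le_of_dvd (Nat.mul_pos (Int.natAbs_pos.mpr hn) hpos) ?_
  refine Finset.prod_primes_dvd _ (fun p hp => (Finset.mem_filter.mp hp).2.prime) ?_
  intro p hp
  rw [Finset.mem_filter, Finset.mem_range] at hp
  have hple : p ≤ Pplus (n * (insulator n : ℤ)) :=
    le_trans (by omega) (Pplus_le_Pplus_of_dvd (dvd_mul_right _ _) hni)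
  have hd := hins p hp.2 hple
  have h2 : p ∣ (n * (insulator n : ℤ)).natAbs := by
    have := Int.natAbs_dvd_natAbs.mpr hd
    simpa using this
  simpa [Int.natAbs_mul] using h2

/-! ### A Chebyshev-type lower bound for the primorial -/

lemma primorial_mono' : Monotone primorial := by
  intro a b h
  refine Finset.prod_le_prod_of_subset_of_one_le'
    (Finset.filter_subset_filter _ (Finset.range_subset_range.mpr (by omega))) ?_
  intro p hp _
  exact (Finset.mem_filter.1 hp).2.one_lt.le

lemma centralBinom_le_primorial_mul {n : ℕ} (n_pos : 0 < n) :
    Nat.centralBinom n ≤ (2 * n) ^ Nat.sqrt (2 * n) * primorial (2 * n) := by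
  have n2_pos : 1 ≤ 2 * n := by omega
  set S := (Finset.range (2 * n + 1)).filter Nat.Prime with hS
  set f := fun x : ℕ => x ^ (Nat.centralBinom n).factorization x with hf
  have hprod : ∏ x ∈ S, f x = Nat.centralBinom n := by
    rw [← Nat.prod_pow_factorization_centralBinom n]
    exact Finset.prod_filter_of_ne fun p _ h => by
      contrapose! h
      dsimp only [f]
      rw [Nat.factorization_eq_zero_of_not_prime _ h, pow_zero]
  rw [← hprod, ← Finset.prod_filter_mul_prod_filter_not S (· ≤ Nat.sqrt (2 * n))]
  apply mul_le_mul'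
  · refine (Finset.prod_le_prod' fun p _ => (?_ : f p ≤ 2 * n)).trans ?_
    · exact Nat.pow_factorization_choose_le (by omega)
    have hcard : (Finset.Icc 1 (Nat.sqrt (2 * n))).card = Nat.sqrt (2 * n) := by
      rw [Nat.card_Icc, Nat.add_sub_cancel]
    rw [Finset.prod_const]
    refine pow_right_mono₀ n2_pos ((Finset.card_le_card fun x hx => ?_).trans hcard.le)
    obtain ⟨h1, h2⟩ := Finset.mem_filter.1 hx
    exact Finset.mem_Icc.mpr ⟨(Finset.mem_filter.1 h1).2.one_lt.le, h2⟩
  · refine (Finset.prod_le_prod' fun p hp => (?_ : f p ≤ p)).trans ?_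
    · obtain ⟨h1, h2⟩ := Finset.mem_filter.1 hp
      refine (pow_right_mono₀ (Finset.mem_filter.1 h1).2.one_lt.le ?_).trans (pow_one p).le
      exact Nat.factorization_choose_le_one (Nat.sqrt_lt'.mp <| not_le.1 h2)
    refine Finset.prod_le_prod_of_subset_of_one_le' (Finset.filter_subset _ _) ?_
    exact fun p hp _ => (Finset.mem_filter.1 hp).2.one_lt.le

lemma four_pow_le' {n : ℕ} (n_pos : 0 < n) :
    4 ^ n ≤ (2 * n + 1) * ((2 * n) ^ Nat.sqrt (2 * n) * primorial (2 * n)) :=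
  (Nat.four_pow_le_two_mul_add_one_mul_central_binom n).trans
    (Nat.mul_le_mul_left _ (centralBinom_le_primorial_mul n_pos))

/-! ### Asymptotics -/

open Asymptotics in
lemma aux_littleo (C : ℝ) :
    (fun x : ℝ => C + (Real.log (2 * x + 1) + Real.sqrt (2 * x) * Real.log (2 * x)))
      =o[atTop] (fun x : ℝ => x) := by
  have t2x : Tendsto (fun x : ℝ => 2 * x) atTop atTop :=
    Tendsto.const_mul_atTop two_pos tendsto_id
  have t2x1 : Tendsto (fun x : ℝ => 2 * x + 1) atTop atTop :=
    tendsto_atTop_add_const_right _ 1 t2x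
  have hconst : (fun _ : ℝ => C) =o[atTop] (fun x : ℝ => x) := by
    refine isLittleO_const_left.mpr (Or.inr ?_)
    exact tendsto_norm_atTop_atTop
  have hlog1 : (fun x : ℝ => Real.log (2 * x + 1)) =o[atTop] (fun x : ℝ => x) := by
    have := Real.isLittleO_log_id_atTop.comp_tendsto t2x1
    refine this.trans_isBigO (isBigO_iff.mpr ⟨3, ?_⟩)
    filter_upwards [eventually_ge_atTop (1 : ℝ)] with x hx
    simp only [Function.comp, id_eq, Real.norm_eq_abs]
    rw [abs_of_nonneg (by linarith), abs_of_nonneg (by linarith)]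
    linarith
  have hlogsq : (fun x : ℝ => Real.log (2 * x)) =o[atTop] (fun x : ℝ => Real.sqrt (2 * x)) := by
    have := (isLittleO_log_rpow_atTop (by norm_num : (0:ℝ) < 1/2)).comp_tendsto t2x
    refine this.congr' (EventuallyEq.refl _ _) ?_
    filter_upwards [eventually_ge_atTop (0 : ℝ)] with x _
    simp [Function.comp, Real.sqrt_eq_rpow]
  have hsq : (fun x : ℝ => Real.sqrt (2 * x) * Real.log (2 * x)) =o[atTop] (fun x : ℝ => x) := by
    have h1 := (isBigO_refl (fun x : ℝ => Real.sqrt (2 * x)) atTop).mul_isLittleO hlogsq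
    refine h1.trans_isBigO (isBigO_iff.mpr ⟨2, ?_⟩)
    filter_upwards [eventually_ge_atTop (0 : ℝ)] with x hx
    rw [Real.norm_eq_abs, Real.norm_eq_abs, Real.mul_self_sqrt (by linarith),
      abs_of_nonneg (by linarith), abs_of_nonneg hx]
  exact hconst.add (hlog1.add hsq)

lemma eventually_primorial_gt (X : ℝ) (hX : 0 < X) :
    ∀ᶠ k : ℕ in atTop, X * Real.exp (3 * (Real.log 2 / 8) * k) < (primorial k : ℝ) := by
  have hL2 : (0:ℝ) < Real.log 2 := Real.log_pos one_lt_two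
  set L2 := Real.log 2 with hL2def
  have hA : ∀ᶠ x : ℝ in atTop,
      (Real.log X + (3/8) * L2) + (Real.log (2*x+1) + Real.sqrt (2*x) * Real.log (2*x))
        < (5/4) * L2 * x := by
    have h := (aux_littleo (Real.log X + (3/8) * L2)).def
      (show (0:ℝ) < (5/8) * L2 by positivity)
    filter_upwards [h, eventually_ge_atTop (1:ℝ)] with x h1 hx
    rw [Real.norm_eq_abs, Real.norm_eq_abs, abs_of_nonneg (by linarith : (0:ℝ) ≤ x)] at h1
    have h2 := (le_abs_self _).trans h1
    nlinarith [mul_pos hL2 (lt_of_lt_of_le one_pos hx)]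
  have hB := tendsto_natCast_atTop_atTop.eventually hA
  obtain ⟨N, hN⟩ := eventually_atTop.mp hB
  refine eventually_atTop.mpr ⟨2 * N + 2, fun k hk => ?_⟩
  set n := k / 2 with hn
  have hkn : N ≤ n ∧ 1 ≤ n ∧ 2 * n ≤ k ∧ k ≤ 2 * n + 1 := by omega
  set s := Nat.sqrt (2 * n) with hs
  have key := hN n hkn.1
  have hcast1 : ((2 * n + 1 : ℕ) : ℝ) = 2 * (n:ℝ) + 1 := by push_cast; ring
  have hcast2 : ((2 * n : ℕ) : ℝ) = 2 * (n:ℝ) := by push_cast; ring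
  have hnR : (1:ℝ) ≤ (n:ℝ) := by exact_mod_cast hkn.2.1
  have hb1 : (1:ℝ) ≤ ((2 * n : ℕ) : ℝ) := by
    rw [hcast2]; linarith
  have hpow_le : (((2 * n) ^ s : ℕ) : ℝ)
      ≤ Real.exp (Real.sqrt (2 * (n:ℝ)) * Real.log (2 * (n:ℝ))) := by
    have h1 : (((2 * n) ^ s : ℕ) : ℝ) = ((2 * n : ℕ) : ℝ) ^ (s : ℕ) := by push_cast; ring
    rw [h1, ← Real.rpow_natCast]
    have h2 : ((s:ℕ):ℝ) ≤ Real.sqrt ((2*n : ℕ) : ℝ) := Real.nat_sqrt_le_real_sqrt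
    calc ((2*n:ℕ):ℝ) ^ ((s:ℕ):ℝ)
        ≤ ((2*n:ℕ):ℝ) ^ (Real.sqrt ((2*n:ℕ):ℝ)) :=
          Real.rpow_le_rpow_of_exponent_le hb1 h2
      _ = Real.exp (Real.sqrt (2*(n:ℝ)) * Real.log (2*(n:ℝ))) := by
          rw [Real.rpow_def_of_pos (by linarith : (0:ℝ) < ((2*n:ℕ):ℝ)), hcast2, mul_comm]
  set D : ℝ := ((2*n+1:ℕ):ℝ) * (((2*n)^s:ℕ):ℝ) with hD
  have hDpos : 0 < D := by
    have p1 : (0:ℝ) < ((2*n+1:ℕ):ℝ) := by exact_mod_cast Nat.succ_pos _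
    have p2 : (0:ℝ) < (((2*n)^s:ℕ):ℝ) := by
      exact_mod_cast pow_pos (by omega : 0 < 2*n) s
    exact mul_pos p1 p2
  have hmain : X * Real.exp (3*(L2/8)*(2*(n:ℝ)+1)) * D < (4:ℝ)^n := by
    have e1 : ((2*n+1:ℕ):ℝ) = Real.exp (Real.log (2*(n:ℝ)+1)) := by
      rw [hcast1, Real.exp_log (by linarith)]
    calc X * Real.exp (3*(L2/8)*(2*(n:ℝ)+1)) * D
        ≤ X * Real.exp (3*(L2/8)*(2*(n:ℝ)+1)) * (((2*n+1:ℕ):ℝ)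
            * Real.exp (Real.sqrt (2*(n:ℝ)) * Real.log (2*(n:ℝ)))) := by
          have hx0 : 0 ≤ X * Real.exp (3*(L2/8)*(2*(n:ℝ)+1)) := by positivity
          have hc0 : (0:ℝ) ≤ ((2*n+1:ℕ):ℝ) := by positivity
          exact mul_le_mul_of_nonneg_left
            (mul_le_mul_of_nonneg_left hpow_le hc0) hx0
      _ = Real.exp (Real.log X + 3*(L2/8)*(2*(n:ℝ)+1) + Real.log (2*(n:ℝ)+1)
            + Real.sqrt (2*(n:ℝ)) * Real.log (2*(n:ℝ))) := by
          rw [e1]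
          nth_rewrite 1 [← Real.exp_log hX]
          rw [← Real.exp_add, ← Real.exp_add, ← Real.exp_add]
          ring_nf
      _ < Real.exp (((2*n:ℕ):ℝ) * L2) := by
          apply Real.exp_lt_exp.mpr
          rw [hcast2]
          nlinarith [key]
      _ = (4:ℝ)^n := by
          rw [Real.exp_nat_mul, Real.exp_log (by norm_num : (0:ℝ) < 2)]
          rw [show (4:ℝ) = 2^2 by norm_num, ← pow_mul]
  have hexp1 : X * Real.exp (3 * (L2/8) * (k:ℝ)) * D
      ≤ X * Real.exp (3*(L2/8)*(2*(n:ℝ)+1)) * D := by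
    have hkle : (k:ℝ) ≤ 2*(n:ℝ)+1 := by exact_mod_cast (by omega : k ≤ 2*n+1)
    have : Real.exp (3 * (L2/8) * (k:ℝ)) ≤ Real.exp (3*(L2/8)*(2*(n:ℝ)+1)) :=
      Real.exp_le_exp.mpr (by nlinarith)
    exact mul_le_mul_of_nonneg_right (mul_le_mul_of_nonneg_left this hX.le) hDpos.le
  have hnat : (4:ℝ)^n ≤ D * (primorial k : ℝ) := by
    have h1 : 4^n ≤ (2*n+1) * ((2*n)^s * primorial (2*n)) := four_pow_le' (by omega)
    have h2 : (2*n+1) * ((2*n)^s * primorial (2*n)) ≤ (2*n+1) * ((2*n)^s * primorial k) :=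
      Nat.mul_le_mul_left _ (Nat.mul_le_mul_left _ (primorial_mono' hkn.2.2.1))
    calc (4:ℝ)^n = ((4^n : ℕ):ℝ) := by push_cast; ring
      _ ≤ (((2*n+1) * ((2*n)^s * primorial k) : ℕ) : ℝ) := by exact_mod_cast h1.trans h2
      _ = D * (primorial k : ℝ) := by rw [hD]; push_cast; ring
  have hfin := lt_of_le_of_lt hexp1 (lt_of_lt_of_le hmain hnat)
  rw [show D * (primorial k : ℝ) = (primorial k : ℝ) * D by ring] at hfin
  exact lt_of_mul_lt_mul_right hfin hDpos.le

/-- Theorem 1: the weak XYZ Conjecture implies that the insulator is a semi-height on 𝔛. -/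
theorem weak_xyz_implies_insulator_semiheight
    (hweak : ∀ δ : ℝ, 0 < δ →
      {t : ℤ × ℤ × ℤ | IsABC t.1 t.2.1 t.2.2 ∧
        Real.log ((height t.1 t.2.1 t.2.2 : ℤ) : ℝ) >
          δ * ((Pplus (t.1 * t.2.1 * t.2.2) : ℕ) : ℝ)}.Finite) :
    ∀ X : ℝ, 0 < X →
      {t : ℤ × ℤ × ℤ | IsABC t.1 t.2.1 t.2.2 ∧
        ((insulator (t.1 * t.2.1 * t.2.2) : ℕ) : ℝ) < X}.Finite := by
  intro X hX
  have hL2 : (0:ℝ) < Real.log 2 := Real.log_pos one_lt_two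
  have hδpos : (0:ℝ) < Real.log 2 / 8 := by positivity
  obtain ⟨N, hN⟩ := eventually_atTop.mp (eventually_primorial_gt X hX)
  set M : ℤ := ⌈Real.exp (Real.log 2 / 8 * N)⌉ with hM
  refine Set.Finite.subset ((hweak (Real.log 2 / 8) hδpos).union
    ((Set.finite_Icc (-M) M).prod ((Set.finite_Icc (-M) M).prod (Set.finite_Icc (-M) M)))) ?_
  rintro ⟨A, B, C⟩ ⟨habc, hins⟩
  by_cases hE : (A, B, C) ∈ {t : ℤ × ℤ × ℤ | IsABC t.1 t.2.1 t.2.2 ∧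
      Real.log ((height t.1 t.2.1 t.2.2 : ℤ) : ℝ) >
        Real.log 2 / 8 * ((Pplus (t.1 * t.2.1 * t.2.2) : ℕ) : ℝ)}
  · exact Or.inl hE
  right
  simp only [Set.mem_setOf_eq, not_and, not_lt] at hE
  have hle : Real.log ((height A B C : ℤ) : ℝ)
      ≤ Real.log 2 / 8 * ((Pplus (A * B * C) : ℕ) : ℝ) := hE habc
  have hn0 : A * B * C ≠ 0 := habc.2.2
  obtain ⟨hipos, _, hinsd⟩ := insulator_spec hn0
  have hprim : primorial (Pplus (A * B * C)) ≤ (A * B * C).natAbs * insulator (A * B * C) :=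
    primorial_le_natAbs_mul_insulator hn0
  have hA0 : A ≠ 0 := fun h => hn0 (by rw [h, zero_mul, zero_mul])
  have hB0 : B ≠ 0 := fun h => hn0 (by rw [h, mul_zero, zero_mul])
  have hC0 : C ≠ 0 := fun h => hn0 (by rw [h, mul_zero])
  have hHA : |A| ≤ height A B C := le_max_left _ _
  have hHB : |B| ≤ height A B C := (le_max_left _ _).trans (le_max_right _ _)
  have hHC : |C| ≤ height A B C := (le_max_right _ _).trans (le_max_right _ _)
  have hH1 : (1:ℝ) ≤ ((height A B C : ℤ) : ℝ) := by
    exact_mod_cast (Int.one_le_abs hA0).trans hHA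
  have habsA : |(A:ℝ)| ≤ ((height A B C : ℤ) : ℝ) := by exact_mod_cast hHA
  have habsB : |(B:ℝ)| ≤ ((height A B C : ℤ) : ℝ) := by exact_mod_cast hHB
  have habsC : |(C:ℝ)| ≤ ((height A B C : ℤ) : ℝ) := by exact_mod_cast hHC
  have habs : (((A * B * C).natAbs : ℕ) : ℝ) ≤ ((height A B C : ℤ) : ℝ) ^ 3 := by
    have h0 : (((A * B * C).natAbs : ℕ) : ℝ) = |(A:ℝ)| * |(B:ℝ)| * |(C:ℝ)| := by
      rw [Nat.cast_natAbs]
      push_cast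
      rw [abs_mul, abs_mul]
    rw [h0]
    have a2 : (0:ℝ) ≤ |(B:ℝ)| := abs_nonneg _
    have a3 : (0:ℝ) ≤ |(C:ℝ)| := abs_nonneg _
    calc |(A:ℝ)| * |(B:ℝ)| * |(C:ℝ)|
        ≤ ((height A B C : ℤ) : ℝ) * ((height A B C : ℤ) : ℝ) * ((height A B C : ℤ) : ℝ) :=
          mul_le_mul (mul_le_mul habsA habsB a2 (by linarith)) habsC a3 (by positivity)
      _ = ((height A B C : ℤ) : ℝ) ^ 3 := by ring
  have hHexp : ((height A B C : ℤ) : ℝ)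
      ≤ Real.exp (Real.log 2 / 8 * ((Pplus (A * B * C) : ℕ) : ℝ)) := by
    rw [← Real.exp_log (by linarith : (0:ℝ) < ((height A B C : ℤ) : ℝ))]
    exact Real.exp_le_exp.mpr hle
  have hchain : (primorial (Pplus (A * B * C)) : ℝ)
      < X * Real.exp (3 * (Real.log 2 / 8) * ((Pplus (A * B * C) : ℕ) : ℝ)) := by
    have c1 : (primorial (Pplus (A * B * C)) : ℝ)
        ≤ (((A * B * C).natAbs : ℕ) : ℝ) * (insulator (A * B * C) : ℝ) := by
      exact_mod_cast hprim
    have c2 : (((A * B * C).natAbs : ℕ) : ℝ) * (insulator (A * B * C) : ℝ)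
        ≤ ((height A B C : ℤ) : ℝ) ^ 3 * (insulator (A * B * C) : ℝ) :=
      mul_le_mul_of_nonneg_right habs (by positivity)
    have c3 : ((height A B C : ℤ) : ℝ) ^ 3 * (insulator (A * B * C) : ℝ)
        < ((height A B C : ℤ) : ℝ) ^ 3 * X :=
      mul_lt_mul_of_pos_left hins (by positivity)
    have c4 : ((height A B C : ℤ) : ℝ) ^ 3 * X
        ≤ Real.exp (Real.log 2 / 8 * ((Pplus (A * B * C) : ℕ) : ℝ)) ^ 3 * X :=
      mul_le_mul_of_nonneg_right (pow_le_pow_left₀ (by linarith) hHexp 3) hX.le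
    have c5 : Real.exp (Real.log 2 / 8 * ((Pplus (A * B * C) : ℕ) : ℝ)) ^ 3 * X
        = X * Real.exp (3 * (Real.log 2 / 8) * ((Pplus (A * B * C) : ℕ) : ℝ)) := by
      rw [← Real.exp_nat_mul]
      push_cast
      ring_nf
    calc (primorial (Pplus (A * B * C)) : ℝ)
        ≤ (((A * B * C).natAbs : ℕ) : ℝ) * (insulator (A * B * C) : ℝ) := c1
      _ ≤ ((height A B C : ℤ) : ℝ) ^ 3 * (insulator (A * B * C) : ℝ) := c2
      _ < ((height A B C : ℤ) : ℝ) ^ 3 * X := c3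
      _ ≤ Real.exp (Real.log 2 / 8 * ((Pplus (A * B * C) : ℕ) : ℝ)) ^ 3 * X := c4
      _ = X * Real.exp (3 * (Real.log 2 / 8) * ((Pplus (A * B * C) : ℕ) : ℝ)) := c5
  have hPN : Pplus (A * B * C) ≤ N := by
    by_contra hcon
    have := hN (Pplus (A * B * C)) (by omega)
    linarith
  have hHM : ((height A B C : ℤ) : ℝ) ≤ (M:ℝ) := by
    calc ((height A B C : ℤ) : ℝ)
        ≤ Real.exp (Real.log 2 / 8 * ((Pplus (A * B * C) : ℕ) : ℝ)) := hHexp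
      _ ≤ Real.exp (Real.log 2 / 8 * (N:ℝ)) := by
          apply Real.exp_le_exp.mpr
          have hc : ((Pplus (A * B * C) : ℕ) : ℝ) ≤ (N:ℝ) := by exact_mod_cast hPN
          nlinarith
      _ ≤ (M:ℝ) := Int.le_ceil _
  have hHM' : height A B C ≤ M := by exact_mod_cast hHM
  have hAM : |A| ≤ M := hHA.trans hHM'
  have hBM : |B| ≤ M := hHB.trans hHM'
  have hCM : |C| ≤ M := hHC.trans hHM'
  exact ⟨Set.mem_Icc.mpr (abs_le.mp hAM), Set.mem_Icc.mpr (abs_le.mp hBM),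
    Set.mem_Icc.mpr (abs_le.mp hCM)⟩
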